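/- For r a nonzero integer, the infinite product C_r = (2/π) · Π_{p | r} (1 − 1/p²)^{−1} · Π_{p ∤ r} p(p² − p − 1) / ((p − 1)(p² − 1)), taken over primes p, converges to a positive real number. -/

import Mathlib

open Real Filter Finset

lemma aux_abs_log_one_sub_le {x : ℝ} (h0 : 0 ≤ x) (h2 : x ≤ 1/2) :
    |Real.log (1 - x)| ≤ 2 * x := by
  have hx1 : (0:ℝ) < 1 - x := by linarith
  have h1 : Real.log (1 - x) ≤ 0 := Real.log_nonpos (by linarith) (by linarith)
  have h2' : -Real.log (1 - x) ≤ 2 * x := by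
    rw [← Real.log_inv]
    have hlog := Real.log_le_sub_one_of_pos (x := (1-x)⁻¹) (by positivity)
    have heq : (1 - x)⁻¹ - 1 = x / (1 - x) := by field_simp; ring
    have hle : x / (1 - x) ≤ 2 * x := by
      rw [div_le_iff₀ hx1]; nlinarith
    linarith
  rw [abs_of_nonpos h1]; exact h2'

theorem stmt_11 (r : ℤ) (hr : r ≠ 0) :
    ∃ L : ℝ, 0 < L ∧
      Filter.Tendsto
        (fun N : ℕ => (2 / Real.pi) *
          ∏ p ∈ (Finset.range N).filter Nat.Prime,
            (if (p : ℤ) ∣ r then (1 - 1 / (p : ℝ) ^ 2)⁻¹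
             else (p : ℝ) * ((p : ℝ) ^ 2 - p - 1) / (((p : ℝ) - 1) * ((p : ℝ) ^ 2 - 1))))
        Filter.atTop (nhds L) := by
  set g : ℕ → ℝ := fun n =>
    if n.Prime then
      (if (n : ℤ) ∣ r then (1 - 1 / (n : ℝ) ^ 2)⁻¹
       else (n : ℝ) * ((n : ℝ) ^ 2 - n - 1) / (((n : ℝ) - 1) * ((n : ℝ) ^ 2 - 1)))
    else 1 with hg
  have hgpos : ∀ n, 0 < g n := by
    intro n
    simp only [hg]
    split_ifs with hp hd
    · have hp2 : (2:ℝ) ≤ n := by exact_mod_cast hp.two_le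
      have : (1:ℝ) / (n:ℝ)^2 < 1 := by
        rw [div_lt_one (by positivity)]; nlinarith
      have : (0:ℝ) < 1 - 1/(n:ℝ)^2 := by linarith
      positivity
    · have hp2 : (2:ℝ) ≤ n := by exact_mod_cast hp.two_le
      apply div_pos
      · nlinarith
      · nlinarith
    · norm_num
  have hbound : ∀ n, |Real.log (g n)| ≤ 6 / (n:ℝ)^2 := by
    intro n
    by_cases hp : n.Prime
    · have hp2 : (2:ℝ) ≤ n := by exact_mod_cast hp.two_le
      have hn2 : (4:ℝ) ≤ (n:ℝ)^2 := by nlinarith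
      have hn2' : (0:ℝ) < (n:ℝ)^2 := by positivity
      simp only [hg, if_pos hp]
      split_ifs with hd
      · rw [Real.log_inv, abs_neg]
        have hx2 : (1:ℝ)/(n:ℝ)^2 ≤ 1/2 := by
          rw [div_le_div_iff₀ hn2' (by norm_num)]; linarith
        calc |Real.log (1 - 1/(n:ℝ)^2)| ≤ 2 * (1/(n:ℝ)^2) :=
              aux_abs_log_one_sub_le (by positivity) hx2
          _ ≤ 6/(n:ℝ)^2 := by rw [mul_one_div, div_le_div_iff₀ hn2' hn2']; nlinarith
      · have hDpos : (0:ℝ) < ((n:ℝ) - 1) * ((n:ℝ)^2 - 1) := by nlinarith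
        have key : (n : ℝ) * ((n : ℝ) ^ 2 - n - 1) / (((n : ℝ) - 1) * ((n : ℝ) ^ 2 - 1))
            = 1 - 1 / (((n : ℝ) - 1) * ((n : ℝ) ^ 2 - 1)) := by
          rw [eq_sub_iff_add_eq, ← add_div, div_eq_one_iff_eq hDpos.ne']
          ring
        rw [key]
        have hx2 : (1:ℝ)/(((n:ℝ) - 1) * ((n:ℝ)^2 - 1)) ≤ 1/2 := by
          rw [div_le_div_iff₀ hDpos (by norm_num)]; nlinarith
        calc |Real.log (1 - 1/(((n:ℝ) - 1) * ((n:ℝ)^2 - 1)))|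
            ≤ 2 * (1/(((n:ℝ) - 1) * ((n:ℝ)^2 - 1))) :=
              aux_abs_log_one_sub_le (by positivity) hx2
          _ ≤ 6/(n:ℝ)^2 := by
              rw [mul_one_div, div_le_div_iff₀ hDpos hn2']; nlinarith
    · simp only [hg, if_neg hp, Real.log_one, abs_zero]
      positivity
  have h6 : Summable (fun n : ℕ => 6 / (n:ℝ)^2) := by
    have := Real.summable_one_div_nat_pow.mpr (show 1 < 2 by norm_num)
    simpa [div_eq_mul_inv, one_div] using this.mul_left 6
  have hs : Summable (fun n => Real.log (g n)) :=
    Summable.of_norm_bounded h6 (fun n => by simpa using hbound n)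
  obtain ⟨S, hS⟩ := hs
  have hSt : Filter.Tendsto (fun N => ∑ i ∈ Finset.range N, Real.log (g i))
      Filter.atTop (nhds S) := hS.tendsto_sum_nat
  refine ⟨(2 / Real.pi) * Real.exp S, ?_, ?_⟩
  · have : (0:ℝ) < Real.pi := Real.pi_pos
    positivity
  · have heq : ∀ N : ℕ, (2 / Real.pi) *
        ∏ p ∈ (Finset.range N).filter Nat.Prime,
          (if (p : ℤ) ∣ r then (1 - 1 / (p : ℝ) ^ 2)⁻¹
           else (p : ℝ) * ((p : ℝ) ^ 2 - p - 1) / (((p : ℝ) - 1) * ((p : ℝ) ^ 2 - 1)))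
        = (2 / Real.pi) * Real.exp (∑ i ∈ Finset.range N, Real.log (g i)) := by
      intro N
      congr 1
      rw [Real.exp_sum, Finset.prod_filter]
      exact Finset.prod_congr rfl fun i _ => (Real.exp_log (hgpos i)).symm
    simp only [heq]
    exact ((Real.continuous_exp.tendsto S).comp hSt).const_mul _
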